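/- Let (A, m, Δ) be an infinitesimal bialgebra of weight λ, define a ⊳ b := Σ_{(b)} b_(1) a b_(2) (the image of Δ(b) under the linear map sending x ⊗ y to x a y), and define [a, b] := a ⊳ b − b ⊳ a. Then [·,·] is a Lie bracket on A: it is k-bilinear, alternating ([a, a] = 0 for all a ∈ A), and satisfies the Jacobi identity [[a, b], c] + [[b, c], a] + [[c, a], b] = 0 for all a, b, c ∈ A. -/
import Mathlib


open TensorProduct LinearMap

/-- The linear map `A ⊗ A → A` sending `x ⊗ y` to `x * a * y`. -/
noncomputable def sandwich (k : Type*) {A : Type*} [CommRing k] [NonUnitalRing A]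
    [Module k A] [SMulCommClass k A A] [IsScalarTower k A A] (a : A) :
    A ⊗[k] A →ₗ[k] A :=
  (LinearMap.mul' k A).comp (LinearMap.rTensor A (LinearMap.mulRight k a))

/-- The commutator `[a, b] := a ⊳ b − b ⊳ a` of `a ⊳ b := Σ b₁ a b₂`. -/
noncomputable def ibracket (k : Type*) {A : Type*} [CommRing k] [NonUnitalRing A]
    [Module k A] [SMulCommClass k A A] [IsScalarTower k A A]
    (Δ : A →ₗ[k] A ⊗[k] A) (a b : A) : A :=
  sandwich k a (Δ b) - sandwich k b (Δ a)

section Aux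
variable {k A : Type*} [CommRing k] [NonUnitalRing A] [Module k A]
  [SMulCommClass k A A] [IsScalarTower k A A]

lemma sandwich_tmul (a x y : A) : sandwich k a (x ⊗ₜ[k] y) = x * a * y := by
  simp [sandwich]

-- aux1 : rTensor mul' ∘ assoc.symm (x ⊗ u) = rTensor (mulLeft x) u
lemma aux1 (x : A) (u : A ⊗[k] A) :
    rTensor A (mul' k A) ((TensorProduct.assoc k A A A).symm (x ⊗ₜ[k] u)) =
      rTensor A (mulLeft k x) u := by
  induction u using TensorProduct.induction_on with
  | zero => simp
  | tmul p q => simp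
  | add s t hs ht => simp only [tmul_add, map_add, hs, ht]

-- aux2 : lTensor mul' (assoc (u ⊗ y)) = lTensor (mulRight y) u
lemma aux2 (y : A) (u : A ⊗[k] A) :
    lTensor A (mul' k A) ((TensorProduct.assoc k A A A) (u ⊗ₜ[k] y)) =
      lTensor A (mulRight k y) u := by
  induction u using TensorProduct.induction_on with
  | zero => simp
  | tmul p q => simp
  | add s t hs ht => simp only [add_tmul, map_add, hs, ht]

-- F1
lemma auxF1 (a x : A) (w : A ⊗[k] A) :
    sandwich k a (rTensor A (mulLeft k x) w) = x * sandwich k a w := by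
  induction w using TensorProduct.induction_on with
  | zero => simp
  | tmul p q => simp [sandwich_tmul, mul_assoc]
  | add s t hs ht => simp only [map_add, hs, ht, mul_add]

-- F2
lemma auxF2 (a b : A) (w : A ⊗[k] A) :
    sandwich k a (lTensor A (mulRight k b) w) = sandwich k a w * b := by
  induction w using TensorProduct.induction_on with
  | zero => simp
  | tmul p q => simp [sandwich_tmul, mul_assoc]
  | add s t hs ht => simp only [map_add, hs, ht, add_mul]

-- E : sandwich a (lTensor mul' (assoc (w ⊗ y))) = sandwich a w * y
lemma auxE (a y : A) (w : A ⊗[k] A) :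
    sandwich k a (lTensor A (mul' k A) ((TensorProduct.assoc k A A A) (w ⊗ₜ[k] y))) =
      sandwich k a w * y := by
  induction w using TensorProduct.induction_on with
  | zero => simp
  | tmul p q => simp [sandwich_tmul, mul_assoc]
  | add s t hs ht => simp only [add_tmul, map_add, hs, ht, add_mul]

-- C' : sandwich a (rTensor mul' (assoc.symm (z ⊗ u))) = z * sandwich a u
lemma auxC' (a z : A) (u : A ⊗[k] A) :
    sandwich k a (rTensor A (mul' k A) ((TensorProduct.assoc k A A A).symm (z ⊗ₜ[k] u))) =
      z * sandwich k a u := by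
  rw [aux1, auxF1]

-- lam' : sandwich a (rTensor (mulRight b) t) = sandwich (b*a) t
lemma auxLam (a b : A) (t : A ⊗[k] A) :
    sandwich k a (rTensor A (mulRight k b) t) = sandwich k (b * a) t := by
  induction t using TensorProduct.induction_on with
  | zero => simp
  | tmul x y => simp [sandwich_tmul, mul_assoc]
  | add s t hs ht => simp only [map_add, hs, ht]

variable (lam : k) (Δ : A →ₗ[k] A ⊗[k] A)

-- delta_mul : Δ (mul' t) = Φ₁ t + Φ₂ t + lam • t
lemma delta_mul
    (hcompat : ∀ a b : A,
      Δ (a * b) = rTensor A (mulLeft k a) (Δ b) + lTensor A (mulRight k b) (Δ a)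
        + lam • (a ⊗ₜ[k] b)) (t : A ⊗[k] A) :
    Δ (mul' k A t) =
      rTensor A (mul' k A) ((TensorProduct.assoc k A A A).symm (lTensor A Δ t)) +
      lTensor A (mul' k A) ((TensorProduct.assoc k A A A) (rTensor A Δ t)) +
      lam • t := by
  induction t using TensorProduct.induction_on with
  | zero => simp
  | tmul x y => rw [mul'_apply, hcompat x y, lTensor_tmul, rTensor_tmul, aux1, aux2]
  | add s t hs ht =>
      simp only [map_add, hs, ht, smul_add]; abel

-- Lemma C: sandwich a (Φ₁ (g_b t)) = mul' (map (mulRight b) (sandwich a ∘ Δ) t)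
lemma lemC (a b : A) (t : A ⊗[k] A) :
    sandwich k a (rTensor A (mul' k A) ((TensorProduct.assoc k A A A).symm
        (lTensor A Δ (rTensor A (mulRight k b) t)))) =
      mul' k A (TensorProduct.map (mulRight k b) ((sandwich k a).comp Δ) t) := by
  induction t using TensorProduct.induction_on with
  | zero => simp
  | tmul x y =>
      rw [rTensor_tmul, lTensor_tmul, auxC', map_tmul, mul'_apply]
      simp
  | add s t hs ht => simp only [map_add, hs, ht]

-- GT : mul' (map (mulRight u) (sandwich v ∘ Δ) t) = sandwich u (lTensor (sandwich v) (lTensor Δ t))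
lemma lemGT (u v : A) (t : A ⊗[k] A) :
    mul' k A (TensorProduct.map (mulRight k u) ((sandwich k v).comp Δ) t) =
      sandwich k u (lTensor A (sandwich k v) (lTensor A Δ t)) := by
  induction t using TensorProduct.induction_on with
  | zero => simp
  | tmul x y =>
      simp [sandwich_tmul, mul_assoc]
  | add s t hs ht => simp only [map_add, hs, ht]

-- HT sublemma
lemma lemHTsub (u v y : A) (w : A ⊗[k] A) :
    sandwich k u (lTensor A (sandwich k v)
        ((TensorProduct.assoc k A A A) (w ⊗ₜ[k] y))) =
      sandwich k u w * v * y := by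
  induction w using TensorProduct.induction_on with
  | zero => simp
  | tmul p q => simp [sandwich_tmul, mul_assoc]
  | add s t hs ht => simp only [add_tmul, map_add, hs, ht, add_mul]

-- HT : mul' (rTensor ((mulRight v) ∘ sandwich u ∘ Δ) t) = sandwich u (lTensor (sandwich v) (assoc (rTensor Δ t)))
lemma lemHT (u v : A) (t : A ⊗[k] A) :
    mul' k A (rTensor A ((mulRight k v).comp ((sandwich k u).comp Δ)) t) =
      sandwich k u (lTensor A (sandwich k v)
        ((TensorProduct.assoc k A A A) (rTensor A Δ t))) := by
  induction t using TensorProduct.induction_on with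
  | zero => simp
  | tmul x y => rw [rTensor_tmul, rTensor_tmul, lemHTsub]; simp
  | add s t hs ht => simp only [map_add, hs, ht]

-- Gco
lemma lemGco
    (hcoassoc : ∀ a : A,
      (TensorProduct.assoc k A A A) (rTensor A Δ (Δ a)) = lTensor A Δ (Δ a))
    (u v c : A) :
    mul' k A (TensorProduct.map (mulRight k u) ((sandwich k v).comp Δ) (Δ c)) =
      mul' k A (rTensor A ((mulRight k v).comp ((sandwich k u).comp Δ)) (Δ c)) := by
  rw [lemGT, lemHT, hcoassoc]

-- Lemma D
lemma lemD (a b : A)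
    (hcompat : ∀ a b : A,
      Δ (a * b) = rTensor A (mulLeft k a) (Δ b) + lTensor A (mulRight k b) (Δ a)
        + lam • (a ⊗ₜ[k] b)) (t : A ⊗[k] A) :
    sandwich k a (lTensor A (mul' k A) ((TensorProduct.assoc k A A A)
        (rTensor A Δ (rTensor A (mulRight k b) t)))) =
      sandwich k (sandwich k a (Δ b)) t +
      mul' k A (rTensor A ((mulRight k b).comp ((sandwich k a).comp Δ)) t) +
      lam • sandwich k (a * b) t := by
  induction t using TensorProduct.induction_on with
  | zero => simp
  | tmul x y =>
      rw [rTensor_tmul, rTensor_tmul, auxE, mulRight_apply, hcompat x b,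
        map_add, map_add, auxF1, auxF2, map_smul]
      simp only [sandwich_tmul, rTensor_tmul, mul'_apply, coe_comp,
        Function.comp_apply, mulRight_apply, smul_mul_assoc, add_mul]
      simp [mul_assoc]
  | add s t hs ht =>
      simp only [map_add, hs, ht, smul_add]; abel

-- preLie
lemma preLie (lam : k) (Δ : A →ₗ[k] A ⊗[k] A)
    (hcoassoc : ∀ a : A,
      (TensorProduct.assoc k A A A) (rTensor A Δ (Δ a)) = lTensor A Δ (Δ a))
    (hcompat : ∀ a b : A,
      Δ (a * b) = rTensor A (mulLeft k a) (Δ b) + lTensor A (mulRight k b) (Δ a)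
        + lam • (a ⊗ₜ[k] b))
    (a b c : A) :
    sandwich k a (Δ (sandwich k b (Δ c))) - sandwich k (sandwich k a (Δ b)) (Δ c) =
    sandwich k b (Δ (sandwich k a (Δ c))) - sandwich k (sandwich k b (Δ a)) (Δ c) := by
  have expand : ∀ x y : A,
      sandwich k x (Δ (sandwich k y (Δ c))) =
        mul' k A (TensorProduct.map (mulRight k y) ((sandwich k x).comp Δ) (Δ c)) +
        (sandwich k (sandwich k x (Δ y)) (Δ c) +
          mul' k A (rTensor A ((mulRight k y).comp ((sandwich k x).comp Δ)) (Δ c)) +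
          lam • sandwich k (x * y) (Δ c)) +
        lam • sandwich k (y * x) (Δ c) := by
    intro x y
    have h1 : sandwich k y (Δ c) = mul' k A (rTensor A (mulRight k y) (Δ c)) := rfl
    rw [h1, delta_mul lam Δ hcompat, map_add, map_add, map_smul,
      lemC, lemD lam Δ x y hcompat, auxLam]
  rw [expand a b, expand b a, lemGco Δ hcoassoc b a, lemGco Δ hcoassoc a b]
  abel

lemma sandwich_param_add (a b : A) (t : A ⊗[k] A) :
    sandwich k (a + b) t = sandwich k a t + sandwich k b t := by
  induction t using TensorProduct.induction_on with
  | zero => simp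
  | tmul x y => simp [sandwich_tmul, mul_add, add_mul]
  | add s t hs ht => simp only [map_add, hs, ht]; abel

lemma sandwich_param_smul (r : k) (a : A) (t : A ⊗[k] A) :
    sandwich k (r • a) t = r • sandwich k a t := by
  induction t using TensorProduct.induction_on with
  | zero => simp
  | tmul x y => simp [sandwich_tmul, mul_smul_comm, smul_mul_assoc]
  | add s t hs ht => simp only [map_add, hs, ht, smul_add]

lemma sandwich_param_sub (a b : A) (t : A ⊗[k] A) :
    sandwich k (a - b) t = sandwich k a t - sandwich k b t := by
  induction t using TensorProduct.induction_on with
  | zero => simp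
  | tmul x y => simp [sandwich_tmul, mul_sub, sub_mul]
  | add s t hs ht => simp only [map_add, hs, ht]; abel

end Aux
/-- In an infinitesimal bialgebra of weight `λ`, the commutator `[a, b] := a ⊳ b − b ⊳ a`
of `a ⊳ b := Σ b₁ a b₂` is a Lie bracket on `A`: it is `k`-bilinear, alternating,
and satisfies the Jacobi identity. -/
theorem infinitesimal_bialgebra_gives_lie_bracket
    {k A : Type*} [CommRing k] [NonUnitalRing A] [Module k A]
    [SMulCommClass k A A] [IsScalarTower k A A] (lam : k)
    (Δ : A →ₗ[k] A ⊗[k] A)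
    (hcoassoc : ∀ a : A,
      (TensorProduct.assoc k A A A) (LinearMap.rTensor A Δ (Δ a)) =
        LinearMap.lTensor A Δ (Δ a))
    (hcompat : ∀ a b : A,
      Δ (a * b) =
        LinearMap.rTensor A (LinearMap.mulLeft k a) (Δ b) +
        LinearMap.lTensor A (LinearMap.mulRight k b) (Δ a) +
        lam • (a ⊗ₜ[k] b)) :
    (∀ a a' b : A, ibracket k Δ (a + a') b = ibracket k Δ a b + ibracket k Δ a' b) ∧
    (∀ (r : k) (a b : A), ibracket k Δ (r • a) b = r • ibracket k Δ a b) ∧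
    (∀ a b b' : A, ibracket k Δ a (b + b') = ibracket k Δ a b + ibracket k Δ a b') ∧
    (∀ (r : k) (a b : A), ibracket k Δ a (r • b) = r • ibracket k Δ a b) ∧
    (∀ a : A, ibracket k Δ a a = 0) ∧
    (∀ a b c : A,
      ibracket k Δ (ibracket k Δ a b) c + ibracket k Δ (ibracket k Δ b c) a +
        ibracket k Δ (ibracket k Δ c a) b = 0) := by
  refine ⟨?_, ?_, ?_, ?_, ?_, ?_⟩
  · intro a a' b
    simp only [ibracket, map_add, sandwich_param_add]
    abel
  · intro r a b
    simp only [ibracket, map_smul, sandwich_param_smul, smul_sub]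
  · intro a b b'
    simp only [ibracket, map_add, sandwich_param_add]
    abel
  · intro r a b
    simp only [ibracket, map_smul, sandwich_param_smul, smul_sub]
  · intro a
    simp [ibracket]
  · intro a b c
    have key := preLie lam Δ hcoassoc hcompat
    have e1 := key a b c
    have e2 := key b c a
    have e3 := key c a b
    simp only [ibracket, map_sub, sandwich_param_sub]
    linear_combination (norm := abel) -e1 - e2 - e3
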